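/- Let b > a be reals, let (a_n) be a sequence with a_n → a and a_n < b, let (f_n) be continuous functions on [a_n, b] with 0 < c ≤ f_n(x) ≤ C, and let (p_n) be polynomials of uniformly bounded degree with p_n(a_n) = 0, p_n'(a_n) = S_n > 0, p_n^{(k)}(a_n) ≥ 0 for k ≥ 2. If S_n → 0 and for each k ≥ 2 the values p_n^{(k)}(a_n) are bounded above uniformly in n, then ∫_{a_n}^{b} f_n(x)/√(p_n(x)) dx → ∞. -/

import Mathlib

open Filter MeasureTheory

lemma taylor_coeff_facts (p : Polynomial ℝ) (r : ℝ) (k : ℕ)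
    (h : 0 ≤ (Polynomial.derivative^[k] p).eval r) :
    0 ≤ (Polynomial.taylor r p).coeff k ∧
      (Polynomial.taylor r p).coeff k ≤ (Polynomial.derivative^[k] p).eval r := by
  have key : (Polynomial.derivative^[k] p).eval r
      = (Nat.factorial k : ℝ) * (Polynomial.taylor r p).coeff k := by
    rw [Polynomial.taylor_coeff, ← Polynomial.factorial_smul_hasseDeriv]
    simp [nsmul_eq_mul]
  have hfac : (1:ℝ) ≤ (Nat.factorial k : ℝ) := by exact_mod_cast Nat.one_le_iff_ne_zero.mpr (Nat.factorial_ne_zero k)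
  constructor <;> nlinarith [h]

lemma eval_taylor_split (q : Polynomial ℝ) (D : ℕ) (hD : q.natDegree ≤ D) (t : ℝ) :
    q.eval t = q.coeff 0 + q.coeff 1 * t
      + ∑ i ∈ Finset.range D, q.coeff (i+2) * t^(i+2) := by
  rw [Polynomial.eval_eq_sum_range' (n := D + 2) (by omega) t]
  rw [Finset.sum_range_succ', Finset.sum_range_succ']
  simp [pow_succ]
  ring

lemma sqrt_add_le' {A B : ℝ} (hA : 0 ≤ A) (hB : 0 ≤ B) :
    Real.sqrt (A + B) ≤ Real.sqrt A + Real.sqrt B := by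
  have h1 : A + B ≤ (Real.sqrt A + Real.sqrt B)^2 := by
    nlinarith [Real.sq_sqrt hA, Real.sq_sqrt hB, Real.sqrt_nonneg A, Real.sqrt_nonneg B]
  calc Real.sqrt (A + B) ≤ Real.sqrt ((Real.sqrt A + Real.sqrt B)^2) := Real.sqrt_le_sqrt h1
    _ = Real.sqrt A + Real.sqrt B := Real.sqrt_sq (by positivity)

set_option maxHeartbeats 1000000 in
lemma key_integral_bound (r b : ℝ) (hrb : r < b) (S M cc C : ℝ)
    (hS : 0 < S) (hM : 0 < M) (hcc : 0 < cc)
    (f : ℝ → ℝ) (P : Polynomial ℝ) (hfc : ContinuousOn f (Set.Icc r b))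
    (hflb : ∀ x ∈ Set.Icc r b, cc ≤ f x) (hfub : ∀ x ∈ Set.Icc r b, f x ≤ C)
    (hPlb : ∀ x ∈ Set.Icc r b, S * (x - r) ≤ P.eval x)
    (hPub : ∀ x ∈ Set.Icc r b, P.eval x ≤ S * (x - r) + M * (x - r)^2) :
    (2*cc/Real.sqrt M) * (Real.log (Real.sqrt S + Real.sqrt M * Real.sqrt (b - r))
        - Real.log (Real.sqrt S))
      ≤ ∫ x in r..b, f x / Real.sqrt (P.eval x) := by
  have hrb' : r ≤ b := hrb.le
  have hsS : 0 < Real.sqrt S := Real.sqrt_pos.mpr hS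
  have hsM : 0 < Real.sqrt M := Real.sqrt_pos.mpr hM
  set φ : ℝ → ℝ := fun x => cc / (Real.sqrt S * Real.sqrt (x - r) + Real.sqrt M * (x - r))
    with hφdef
  set G : ℝ → ℝ := fun x =>
    (2*cc/Real.sqrt M) * Real.log (Real.sqrt S + Real.sqrt M * Real.sqrt (x - r)) with hGdef
  -- pointwise comparison
  have hpoint : ∀ x ∈ Set.Icc r b, φ x ≤ f x / Real.sqrt (P.eval x) := by
    intro x hx
    rcases eq_or_lt_of_le hx.1 with h | h
    · have hxr : x = r := h.symm
      subst hxr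
      have h1 : P.eval x = 0 := le_antisymm (by simpa using hPub x hx) (by simpa using hPlb x hx)
      simp [hφdef, h1]
    · have ht : 0 < x - r := by linarith
      have hP1 : S * (x - r) ≤ P.eval x := hPlb x hx
      have hP0 : 0 < P.eval x := lt_of_lt_of_le (by positivity) hP1
      have hsub : Real.sqrt (P.eval x) ≤ Real.sqrt S * Real.sqrt (x - r) + Real.sqrt M * (x - r) := by
        have h2 : Real.sqrt (P.eval x) ≤ Real.sqrt (S * (x - r) + M * (x - r)^2) :=
          Real.sqrt_le_sqrt (hPub x hx)
        have h3 := sqrt_add_le' (A := S * (x - r)) (B := M * (x - r)^2) (by positivity) (by positivity)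
        have h4 : Real.sqrt (S * (x - r)) = Real.sqrt S * Real.sqrt (x - r) :=
          Real.sqrt_mul hS.le _
        have h5 : Real.sqrt (M * (x - r)^2) = Real.sqrt M * (x - r) := by
          rw [Real.sqrt_mul hM.le, Real.sqrt_sq ht.le]
        linarith
      have hsP : 0 < Real.sqrt (P.eval x) := Real.sqrt_pos.mpr hP0
      exact div_le_div₀ (le_trans hcc.le (hflb x hx)) (hflb x hx) hsP hsub
  -- dominating function
  have hmeas : MeasurableSet (Set.Ioc r b) := measurableSet_Ioc
  set g : ℝ → ℝ := fun x => ((max cc C)/Real.sqrt S) * (x - r) ^ (-(1/2) : ℝ) with hgdef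
  have hgint : IntervalIntegrable g volume r b := by
    have h1 : IntervalIntegrable (fun x : ℝ => x ^ (-(1/2) : ℝ)) volume 0 (b - r) :=
      intervalIntegral.intervalIntegrable_rpow' (by norm_num)
    have h2 := (h1.comp_sub_right r).const_mul ((max cc C)/Real.sqrt S)
    simpa only [zero_add, sub_add_cancel] using h2
  have hgeq : ∀ x ∈ Set.Ioc r b, g x = (max cc C) / (Real.sqrt S * Real.sqrt (x - r)) := by
    intro x hx
    have ht : 0 < x - r := by linarith [hx.1]
    rw [hgdef]
    simp only []
    rw [Real.rpow_neg ht.le, ← Real.sqrt_eq_rpow, ← div_eq_mul_inv, div_div]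
  have hφint : IntervalIntegrable φ volume r b := by
    rw [intervalIntegrable_iff_integrableOn_Ioc_of_le hrb']
    have hmφ : AEStronglyMeasurable φ (volume.restrict (Set.Ioc r b)) := by
      apply ContinuousOn.aestronglyMeasurable ?_ hmeas
      apply ContinuousOn.div continuousOn_const
      · fun_prop
      · intro x hx
        have ht : 0 < x - r := by linarith [hx.1]
        have hst : 0 < Real.sqrt (x - r) := Real.sqrt_pos.mpr ht
        positivity
    apply Integrable.mono' ((intervalIntegrable_iff_integrableOn_Ioc_of_le hrb').mp hgint) hmφ
    rw [ae_restrict_iff' hmeas]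
    filter_upwards with x hx
    have ht : 0 < x - r := by linarith [hx.1]
    have hst : 0 < Real.sqrt (x - r) := Real.sqrt_pos.mpr ht
    have hden : 0 < Real.sqrt S * Real.sqrt (x - r) + Real.sqrt M * (x - r) := by positivity
    rw [hgeq x hx, Real.norm_eq_abs, abs_of_nonneg (by positivity)]
    apply div_le_div₀ (by positivity) (le_max_left _ _) (by positivity)
    nlinarith
  have hFint : IntervalIntegrable (fun x => f x / Real.sqrt (P.eval x)) volume r b := by
    rw [intervalIntegrable_iff_integrableOn_Ioc_of_le hrb']
    have hmF : AEStronglyMeasurable (fun x => f x / Real.sqrt (P.eval x))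
        (volume.restrict (Set.Ioc r b)) := by
      have c1 : Continuous fun x : ℝ => Real.sqrt (P.eval x) :=
        Real.continuous_sqrt.comp P.continuous
      rw [aestronglyMeasurable_iff_aemeasurable]
      exact AEMeasurable.div
        ((hfc.mono Set.Ioc_subset_Icc_self).aestronglyMeasurable hmeas).aemeasurable
        c1.aemeasurable
    apply Integrable.mono' ((intervalIntegrable_iff_integrableOn_Ioc_of_le hrb').mp hgint) hmF
    rw [ae_restrict_iff' hmeas]
    filter_upwards with x hx
    have hx' : x ∈ Set.Icc r b := Set.Ioc_subset_Icc_self hx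
    have ht : 0 < x - r := by linarith [hx.1]
    have hst : 0 < Real.sqrt (x - r) := Real.sqrt_pos.mpr ht
    have hP0 : 0 < P.eval x := lt_of_lt_of_le (by positivity) (hPlb x hx')
    have hsP : 0 < Real.sqrt (P.eval x) := Real.sqrt_pos.mpr hP0
    have hlow : Real.sqrt S * Real.sqrt (x - r) ≤ Real.sqrt (P.eval x) := by
      rw [← Real.sqrt_mul hS.le]
      exact Real.sqrt_le_sqrt (hPlb x hx')
    rw [hgeq x hx, Real.norm_eq_abs,
      abs_of_nonneg (div_nonneg (le_trans hcc.le (hflb x hx')) hsP.le)]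
    exact div_le_div₀ (le_trans hcc.le (le_max_left _ _))
      (le_trans (hfub x hx') (le_max_right _ _)) (by positivity) hlow
  -- FTC
  have hGcont : ContinuousOn G (Set.Icc r b) := by
    apply ContinuousOn.mul continuousOn_const
    apply ContinuousOn.log
    · exact continuousOn_const.add (continuousOn_const.mul
        (Real.continuous_sqrt.comp_continuousOn ((continuousOn_id).sub continuousOn_const)))
    · intro x hx
      have h0 : 0 ≤ Real.sqrt M * Real.sqrt (x - r) := by positivity
      nlinarith
  have hGderiv : ∀ x ∈ Set.Ioo r b, HasDerivWithinAt G (φ x) (Set.Ioi x) x := by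
    intro x hx
    have ht : 0 < x - r := by linarith [hx.1]
    have hst : 0 < Real.sqrt (x - r) := Real.sqrt_pos.mpr ht
    have h1 : HasDerivAt (fun y : ℝ => y - r) 1 x := (hasDerivAt_id x).sub_const r
    have h2 : HasDerivAt (fun y : ℝ => Real.sqrt (y - r)) (1 / (2 * Real.sqrt (x - r))) x := by
      have := (Real.hasDerivAt_sqrt (ne_of_gt ht)).comp x h1
      simpa [Function.comp_def] using this
    have h3 : HasDerivAt (fun y => Real.sqrt S + Real.sqrt M * Real.sqrt (y - r))
        (Real.sqrt M * (1 / (2 * Real.sqrt (x - r)))) x := ((h2.const_mul _).const_add _)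
    have hden : Real.sqrt S + Real.sqrt M * Real.sqrt (x - r) ≠ 0 := by
      have h0 : 0 ≤ Real.sqrt M * Real.sqrt (x - r) := by positivity
      nlinarith
    have h4 := (h3.log hden).const_mul (2*cc/Real.sqrt M)
    have heq : (2*cc/Real.sqrt M) * ((Real.sqrt M * (1 / (2 * Real.sqrt (x - r)))) /
        (Real.sqrt S + Real.sqrt M * Real.sqrt (x - r))) = φ x := by
      rw [hφdef]
      have htt : Real.sqrt (x - r) * Real.sqrt (x - r) = x - r := Real.mul_self_sqrt ht.le
      have hdenpos : 0 < Real.sqrt S + Real.sqrt M * Real.sqrt (x - r) := by positivity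
      show _ = cc / (Real.sqrt S * Real.sqrt (x - r) + Real.sqrt M * (x - r))
      rw [show Real.sqrt S * Real.sqrt (x - r) + Real.sqrt M * (x - r) = Real.sqrt (x - r) * (Real.sqrt S + Real.sqrt M * Real.sqrt (x - r)) by linear_combination (-Real.sqrt M) * htt]
      field_simp
    rw [heq] at h4
    exact h4.hasDerivWithinAt
  have hFTC : ∫ x in r..b, φ x = G b - G r :=
    intervalIntegral.integral_eq_sub_of_hasDeriv_right_of_le hrb' hGcont hGderiv hφint
  have hGr : G r = (2*cc/Real.sqrt M) * Real.log (Real.sqrt S) := by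
    rw [hGdef]; simp
  have hGb : G b = (2*cc/Real.sqrt M) * Real.log (Real.sqrt S + Real.sqrt M * Real.sqrt (b - r)) := rfl
  calc (2*cc/Real.sqrt M) * (Real.log (Real.sqrt S + Real.sqrt M * Real.sqrt (b - r))
        - Real.log (Real.sqrt S)) = G b - G r := by rw [hGb, hGr]; ring
    _ = ∫ x in r..b, φ x := hFTC.symm
    _ ≤ ∫ x in r..b, f x / Real.sqrt (P.eval x) :=
        intervalIntegral.integral_mono_on hrb' hφint hFint hpoint

theorem stmt1 (a b : ℝ) (hab : a < b)
    (aseq : ℕ → ℝ) (haseq : Tendsto aseq atTop (nhds a))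
    (haseqb : ∀ n, aseq n < b)
    (f : ℕ → ℝ → ℝ) (c C : ℝ) (hc : 0 < c)
    (hfcont : ∀ n, ContinuousOn (f n) (Set.Icc (aseq n) b))
    (hfbound : ∀ n, ∀ x ∈ Set.Icc (aseq n) b, c ≤ f n x ∧ f n x ≤ C)
    (p : ℕ → Polynomial ℝ) (D : ℕ) (hdeg : ∀ n, (p n).natDegree ≤ D)
    (S : ℕ → ℝ) (hS : ∀ n, 0 < S n)
    (hp0 : ∀ n, (p n).eval (aseq n) = 0)
    (hp1 : ∀ n, (Polynomial.derivative (p n)).eval (aseq n) = S n)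
    (hpk : ∀ n, ∀ k, 2 ≤ k →
      0 ≤ ((Polynomial.derivative)^[k] (p n)).eval (aseq n))
    (hS0 : Tendsto S atTop (nhds 0))
    (hpkbound : ∀ k, 2 ≤ k → ∃ M : ℝ, ∀ n,
      ((Polynomial.derivative)^[k] (p n)).eval (aseq n) ≤ M) :
    Tendsto (fun n => ∫ x in (aseq n)..b, f n x / Real.sqrt ((p n).eval x))
      atTop atTop := by
  obtain ⟨A, hA⟩ : ∃ A, ∀ n, A ≤ aseq n := by
    obtain ⟨A, hA⟩ := haseq.bddBelow_range
    exact ⟨A, fun n => hA (Set.mem_range_self n)⟩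
  set L : ℝ := max (b - A) 1 with hLdef
  have hL1 : (1:ℝ) ≤ L := le_max_right _ _
  have hL0 : (0:ℝ) < L := lt_of_lt_of_le one_pos hL1
  have hLn : ∀ n, b - aseq n ≤ L := fun n => le_trans (by linarith [hA n]) (le_max_left _ _)
  have hBex : ∀ k, ∃ Bk : ℝ, 0 ≤ Bk ∧ (2 ≤ k → ∀ n,
      ((Polynomial.derivative)^[k] (p n)).eval (aseq n) ≤ Bk) := by
    intro k
    by_cases h : 2 ≤ k
    · obtain ⟨Mk, hMk⟩ := hpkbound k h
      exact ⟨max Mk 0, le_max_right _ _, fun _ n => le_trans (hMk n) (le_max_left _ _)⟩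
    · exact ⟨0, le_refl _, fun h2 => absurd h2 h⟩
  choose B hB0 hB using hBex
  set M : ℝ := (∑ i ∈ Finset.range D, B (i+2) * L ^ i) + 1 with hMdef
  have hsum0 : 0 ≤ ∑ i ∈ Finset.range D, B (i+2) * L ^ i :=
    Finset.sum_nonneg fun i _ => mul_nonneg (hB0 _) (by positivity)
  have hM0 : 0 < M := by rw [hMdef]; linarith
  -- polynomial bounds
  have hsplit : ∀ n, ∀ x : ℝ, (p n).eval x = S n * (x - aseq n) +
      ∑ i ∈ Finset.range D, (Polynomial.taylor (aseq n) (p n)).coeff (i+2) * (x - aseq n)^(i+2) := by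
    intro n x
    have h1 : (Polynomial.taylor (aseq n) (p n)).eval (x - aseq n) = (p n).eval x :=
      Polynomial.taylor_eval_sub _ _ _
    rw [← h1, eval_taylor_split _ D (by rw [Polynomial.natDegree_taylor]; exact hdeg n)]
    rw [Polynomial.taylor_coeff_zero, Polynomial.taylor_coeff_one, hp0 n, hp1 n]
    ring
  have hcoeff : ∀ n i, 0 ≤ (Polynomial.taylor (aseq n) (p n)).coeff (i+2) ∧
      (Polynomial.taylor (aseq n) (p n)).coeff (i+2) ≤ B (i+2) := by
    intro n i
    obtain ⟨h1, h2⟩ := taylor_coeff_facts (p n) (aseq n) (i+2) (hpk n (i+2) (by omega))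
    exact ⟨h1, le_trans h2 (hB (i+2) (by omega) n)⟩
  have hPlb : ∀ n, ∀ x ∈ Set.Icc (aseq n) b, S n * (x - aseq n) ≤ (p n).eval x := by
    intro n x hx
    have ht0 : 0 ≤ x - aseq n := by linarith [hx.1]
    rw [hsplit n x]
    have : 0 ≤ ∑ i ∈ Finset.range D,
        (Polynomial.taylor (aseq n) (p n)).coeff (i+2) * (x - aseq n)^(i+2) :=
      Finset.sum_nonneg fun i _ => mul_nonneg (hcoeff n i).1 (by positivity)
    linarith
  have hPub : ∀ n, ∀ x ∈ Set.Icc (aseq n) b,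
      (p n).eval x ≤ S n * (x - aseq n) + M * (x - aseq n)^2 := by
    intro n x hx
    have ht0 : 0 ≤ x - aseq n := by linarith [hx.1]
    have htL : x - aseq n ≤ L := by linarith [hLn n, hx.2]
    rw [hsplit n x]
    have hsum : ∑ i ∈ Finset.range D,
        (Polynomial.taylor (aseq n) (p n)).coeff (i+2) * (x - aseq n)^(i+2)
        ≤ (∑ i ∈ Finset.range D, B (i+2) * L ^ i) * (x - aseq n)^2 := by
      rw [Finset.sum_mul]
      apply Finset.sum_le_sum
      intro i _
      have h1 : (x - aseq n)^i ≤ L^i := pow_le_pow_left₀ ht0 htL i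
      calc (Polynomial.taylor (aseq n) (p n)).coeff (i+2) * (x - aseq n)^(i+2)
          = (Polynomial.taylor (aseq n) (p n)).coeff (i+2) * ((x - aseq n)^i * (x - aseq n)^2) := by
            rw [← pow_add]
        _ ≤ B (i+2) * (L^i * (x - aseq n)^2) := by
            apply mul_le_mul (hcoeff n i).2 (mul_le_mul_of_nonneg_right h1 (sq_nonneg _))
              (by positivity) (hB0 _)
        _ = B (i+2) * L^i * (x - aseq n)^2 := by ring
    have h2 : (∑ i ∈ Finset.range D, B (i+2) * L ^ i) * (x - aseq n)^2 ≤ M * (x - aseq n)^2 := by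
      apply mul_le_mul_of_nonneg_right _ (sq_nonneg _)
      rw [hMdef]; linarith
    linarith
  -- eventual bound
  set K : ℝ := Real.sqrt M * Real.sqrt ((b - a)/2) with hKdef
  have hK0 : 0 < K := by
    apply mul_pos (Real.sqrt_pos.mpr hM0) (Real.sqrt_pos.mpr (by linarith))
  have hev : ∀ᶠ n in atTop, (b - a)/2 ≤ b - aseq n := by
    filter_upwards [haseq.eventually_lt_const (show a < a + (b - a)/2 by linarith)] with n hn
    linarith
  have hevbound : (fun n => (2*c/Real.sqrt M) * (Real.log K - Real.log (Real.sqrt (S n))))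
      ≤ᶠ[atTop] (fun n => ∫ x in (aseq n)..b, f n x / Real.sqrt ((p n).eval x)) := by
    filter_upwards [hev] with n hn
    have key := key_integral_bound (aseq n) b (haseqb n) (S n) M c C (hS n) hM0 hc
      (f n) (p n) (hfcont n) (fun x hx => (hfbound n x hx).1) (fun x hx => (hfbound n x hx).2)
      (hPlb n) (hPub n)
    refine le_trans ?_ key
    apply mul_le_mul_of_nonneg_left _ (by positivity)
    apply sub_le_sub_right
    apply Real.log_le_log hK0
    have h1 : Real.sqrt ((b-a)/2) ≤ Real.sqrt (b - aseq n) := Real.sqrt_le_sqrt hn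
    have h2 : 0 ≤ Real.sqrt (S n) := Real.sqrt_nonneg _
    have h3 : 0 < Real.sqrt M := Real.sqrt_pos.mpr hM0
    rw [hKdef]
    nlinarith
  apply tendsto_atTop_mono' atTop hevbound
  have hsq : Tendsto (fun n => Real.sqrt (S n)) atTop (nhds 0) := by
    have := (Real.continuous_sqrt.tendsto 0).comp hS0
    simpa [Function.comp_def] using this
  have hsq' : Tendsto (fun n => Real.sqrt (S n)) atTop (nhdsWithin 0 (Set.Ioi 0)) :=
    tendsto_nhdsWithin_of_tendsto_nhds_of_eventually_within _ hsq
      (Eventually.of_forall fun n => Real.sqrt_pos.mpr (hS n))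
  have hlog : Tendsto (fun n => Real.log (Real.sqrt (S n))) atTop atBot :=
    Real.tendsto_log_nhdsGT_zero.comp hsq'
  have h2 : Tendsto (fun n => Real.log K - Real.log (Real.sqrt (S n))) atTop atTop := by
    have hneg : Tendsto (fun n => -Real.log (Real.sqrt (S n))) atTop atTop :=
      tendsto_neg_atBot_atTop.comp hlog
    have := tendsto_atTop_add_const_left atTop (Real.log K) hneg
    simpa [sub_eq_add_neg] using this
  exact h2.const_mul_atTop (by positivity)
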